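/- Let n ≥ 1. (1) For every Schwartz function φ : ℝⁿ → ℂ, the equality ‖x·∇φ‖² = ‖x·∇φ + (n/2)φ‖² + (n/2)² ‖φ‖² holds. (2) There does not exist a nonzero Schwartz function φ : ℝⁿ → ℂ satisfying ‖x·∇φ‖² = (n/2)² ‖φ‖²; in particular, the inequality (n/2)‖φ‖ ≤ ‖x·∇φ‖ holds for all Schwartz φ and is an equality only for φ = 0. -/

import Mathlib

open MeasureTheory SchwartzMap Complex ContinuousLinearMap Finset

/-- The operator `x·∇` applied to `φ`: `(x·∇φ)(x) = Σ_j x_j ∂_jφ(x)`. -/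
noncomputable def xGrad (n : ℕ) (φ : EuclideanSpace ℝ (Fin n) → ℂ) :
    EuclideanSpace ℝ (Fin n) → ℂ :=
  fun x => ∑ j, (x j : ℂ) * fderiv ℝ φ x (EuclideanSpace.single j 1)

noncomputable def SchwartzMap.pderivCLM (𝕜 : Type*) [RCLike 𝕜] {E F : Type*} [NormedAddCommGroup E]
    [NormedSpace ℝ E] [NormedAddCommGroup F] [NormedSpace ℝ F] [NormedSpace 𝕜 F]
    [SMulCommClass ℝ 𝕜 F] (m : E) : 𝓢(E, F) →L[𝕜] 𝓢(E, F) :=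
  SchwartzMap.evalCLM 𝕜 E F m ∘L SchwartzMap.fderivCLM 𝕜 E F

theorem SchwartzMap.pderivCLM_apply (𝕜 : Type*) [RCLike 𝕜] {E F : Type*} [NormedAddCommGroup E]
    [NormedSpace ℝ E] [NormedAddCommGroup F] [NormedSpace ℝ F] [NormedSpace 𝕜 F]
    [SMulCommClass ℝ 𝕜 F] (m : E) (f : 𝓢(E, F)) (x : E) :
    SchwartzMap.pderivCLM 𝕜 m f x = fderiv ℝ f x m := rfl

section aux
variable {n : ℕ}

private lemma coordTemp (j : Fin n) :
    Function.HasTemperateGrowth (fun x : EuclideanSpace ℝ (Fin n) => ((x j : ℝ) : ℂ)) := by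
  have := (Complex.ofRealCLM.comp
    (EuclideanSpace.proj j : EuclideanSpace ℝ (Fin n) →L[ℝ] ℝ)).hasTemperateGrowth
  exact this

/-- `x·∇φ` as a Schwartz map. -/
noncomputable def xGradS (n : ℕ) (φ : SchwartzMap (EuclideanSpace ℝ (Fin n)) ℂ) :
    SchwartzMap (EuclideanSpace ℝ (Fin n)) ℂ :=
  ∑ j, SchwartzMap.bilinLeftCLM (ContinuousLinearMap.mul ℝ ℂ) (coordTemp j)
      (SchwartzMap.pderivCLM ℝ (EuclideanSpace.single j 1) φ)

lemma xGradS_apply (φ : SchwartzMap (EuclideanSpace ℝ (Fin n)) ℂ) (x : EuclideanSpace ℝ (Fin n)) :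
    xGradS n φ x = xGrad n (⇑φ) x := by
  have : (⇑(xGradS n φ) : EuclideanSpace ℝ (Fin n) → ℂ)
      = ∑ j, ⇑(SchwartzMap.bilinLeftCLM (ContinuousLinearMap.mul ℝ ℂ) (coordTemp j)
          (SchwartzMap.pderivCLM ℝ (EuclideanSpace.single j 1) φ)) := by
    rw [xGradS]
    exact map_sum (FunLike.coeAddMonoidHom (SchwartzMap (EuclideanSpace ℝ (Fin n)) ℂ)
      (EuclideanSpace ℝ (Fin n)) ℂ) _ _
  rw [xGrad, show xGradS n φ x = (⇑(xGradS n φ)) x from rfl, this]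
  rw [Finset.sum_apply]
  exact Finset.sum_congr rfl fun j _ => by
    simp only [SchwartzMap.bilinLeftCLM, SchwartzMap.mkCLM, SchwartzMap.mkLM,
      ContinuousLinearMap.coe_mk', LinearMap.coe_mk, AddHom.coe_mk]
    show fderiv ℝ (⇑φ) x (EuclideanSpace.single j 1) * ((x j : ℝ) : ℂ) = _
    rw [mul_comm]

end aux

section ibp
variable {n : ℕ}

private lemma int_conj_mul (ψ₁ ψ₂ : SchwartzMap (EuclideanSpace ℝ (Fin n)) ℂ) :
    Integrable (fun x => (starRingEnd ℂ) (ψ₁ x) * ψ₂ x) := by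
  refine ψ₂.integrable.bdd_mul (c := SchwartzMap.seminorm ℝ 0 0 ψ₁)
    ((continuous_star.comp ψ₁.continuous).aestronglyMeasurable) ?_
  exact Filter.Eventually.of_forall fun x => by simpa using SchwartzMap.norm_le_seminorm ℝ ψ₁ x

private lemma int_mul_conj (ψ₁ ψ₂ : SchwartzMap (EuclideanSpace ℝ (Fin n)) ℂ) :
    Integrable (fun x => ψ₁ x * (starRingEnd ℂ) (ψ₂ x)) := by
  simpa [mul_comm] using int_conj_mul ψ₂ ψ₁

private lemma int_normSq (ψ : SchwartzMap (EuclideanSpace ℝ (Fin n)) ℂ) :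
    Integrable (fun x => ‖ψ x‖ ^ 2) := by
  have : Integrable (fun x => ‖ψ x‖ * ‖ψ x‖) := by
    refine ψ.integrable.norm.bdd_mul (c := SchwartzMap.seminorm ℝ 0 0 ψ)
      (ψ.continuous.norm.aestronglyMeasurable) ?_
    exact Filter.Eventually.of_forall fun x => by simpa using SchwartzMap.norm_le_seminorm ℝ ψ x
  simpa [pow_two] using this

private lemma mulCoord_apply (j : Fin n) (ψ : SchwartzMap (EuclideanSpace ℝ (Fin n)) ℂ)
    (x : EuclideanSpace ℝ (Fin n)) :
    (SchwartzMap.bilinLeftCLM (ContinuousLinearMap.mul ℝ ℂ) (coordTemp j) ψ) x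
      = ψ x * ((x j : ℝ) : ℂ) := rfl

private lemma ibp_j (φ : SchwartzMap (EuclideanSpace ℝ (Fin n)) ℂ) (j : Fin n) :
    ∫ x, ((x j : ℝ) : ℂ) * (φ x * (starRingEnd ℂ) (fderiv ℝ (⇑φ) x (EuclideanSpace.single j 1))
        + (starRingEnd ℂ) (φ x) * fderiv ℝ (⇑φ) x (EuclideanSpace.single j 1))
      = - ∫ x, φ x * (starRingEnd ℂ) (φ x) := by
  classical
  set v : EuclideanSpace ℝ (Fin n) := EuclideanSpace.single j 1 with hv
  set Kj : EuclideanSpace ℝ (Fin n) →L[ℝ] ℂ :=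
    Complex.ofRealCLM.comp (EuclideanSpace.proj j) with hK
  set f : EuclideanSpace ℝ (Fin n) → ℂ := fun x => ((x j : ℝ) : ℂ) with hf_def
  set g : EuclideanSpace ℝ (Fin n) → ℂ := fun x => φ x * star (φ x) with hg_def
  set g' : EuclideanSpace ℝ (Fin n) → (EuclideanSpace ℝ (Fin n) →L[ℝ] ℂ) := fun x =>
    φ x • (((starL' ℝ : ℂ ≃L[ℝ] ℂ) : ℂ →L[ℝ] ℂ) ∘L (fderiv ℝ (⇑φ) x))
      + star (φ x) • fderiv ℝ (⇑φ) x with hg'_def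
  have hf : ∀ x, HasFDerivAt f Kj x := fun x => by
    exact Kj.hasFDerivAt (x := x)
  have hg : ∀ x, HasFDerivAt g (g' x) x := fun x =>
    ((φ.differentiable x).hasFDerivAt).mul ((φ.differentiable x).hasFDerivAt.star)
  set P := SchwartzMap.bilinLeftCLM (ContinuousLinearMap.mul ℝ ℂ) (coordTemp j) φ with hP
  set Q := SchwartzMap.pderivCLM ℝ v φ with hQ
  have h1 : Integrable (fun x => (ContinuousLinearMap.mul ℝ ℂ) ((fun _ => Kj) x v) (g x)) := by
    have := int_mul_conj φ φ
    refine this.congr (Filter.Eventually.of_forall fun x => ?_)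
    simp [hg_def, hK, hv, EuclideanSpace.single_apply, Complex.star_def]
  have h2 : Integrable (fun x => (ContinuousLinearMap.mul ℝ ℂ) (f x) (g' x v)) := by
    have := (int_mul_conj P Q).add (int_conj_mul P Q)
    refine this.congr (Filter.Eventually.of_forall fun x => ?_)
    simp only [Pi.add_apply, hP, hQ, mulCoord_apply, SchwartzMap.pderivCLM_apply, hg'_def, hf_def,
      ContinuousLinearMap.mul_apply', ContinuousLinearMap.add_apply,
      ContinuousLinearMap.coe_smul', Pi.smul_apply, ContinuousLinearMap.coe_comp',
      Function.comp_apply, ContinuousLinearEquiv.coe_coe, starL'_apply,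
      Complex.star_def, map_mul, Complex.conj_ofReal, smul_eq_mul]
    ring
  have h3 : Integrable (fun x => (ContinuousLinearMap.mul ℝ ℂ) (f x) (g x)) := by
    have := int_mul_conj P φ
    refine this.congr (Filter.Eventually.of_forall fun x => ?_)
    simp only [hP, mulCoord_apply, hg_def, hf_def, ContinuousLinearMap.mul_apply',
      Complex.star_def]
    ring
  have key := integral_bilinear_hasFDerivAt_right_eq_neg_left_of_integrable
    (μ := volume) (B := ContinuousLinearMap.mul ℝ ℂ) (v := v) h1 h2 h3 (fun x _ => hf x) (fun x _ => hg x)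
  calc ∫ x, ((x j : ℝ) : ℂ) * (φ x * (starRingEnd ℂ) (fderiv ℝ (⇑φ) x v)
        + (starRingEnd ℂ) (φ x) * fderiv ℝ (⇑φ) x v)
      = ∫ x, (ContinuousLinearMap.mul ℝ ℂ) (f x) (g' x v) := by
        refine integral_congr_ae (Filter.Eventually.of_forall fun x => ?_)
        simp only [hg'_def, hf_def, ContinuousLinearMap.mul_apply',
          ContinuousLinearMap.add_apply, ContinuousLinearMap.coe_smul', Pi.smul_apply,
          ContinuousLinearMap.coe_comp', Function.comp_apply, ContinuousLinearEquiv.coe_coe,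
          starL'_apply, Complex.star_def, smul_eq_mul]
    _ = - ∫ x, (ContinuousLinearMap.mul ℝ ℂ) ((fun _ => Kj) x v) (g x) := key
    _ = - ∫ x, φ x * (starRingEnd ℂ) (φ x) := by
        congr 1
        refine integral_congr_ae (Filter.Eventually.of_forall fun x => ?_)
        simp [hg_def, hK, hv, EuclideanSpace.single_apply, Complex.star_def]

end ibp

section cross
variable {n : ℕ}

private lemma int_term (φ : SchwartzMap (EuclideanSpace ℝ (Fin n)) ℂ) (j : Fin n) :
    Integrable (fun x => ((x j : ℝ) : ℂ) *
      (φ x * (starRingEnd ℂ) (fderiv ℝ (⇑φ) x (EuclideanSpace.single j 1))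
        + (starRingEnd ℂ) (φ x) * fderiv ℝ (⇑φ) x (EuclideanSpace.single j 1))) := by
  set P := SchwartzMap.bilinLeftCLM (ContinuousLinearMap.mul ℝ ℂ) (coordTemp j) φ with hP
  set Q := SchwartzMap.pderivCLM ℝ (EuclideanSpace.single j 1) φ with hQ
  have := (int_mul_conj P Q).add (int_conj_mul P Q)
  refine this.congr (Filter.Eventually.of_forall fun x => ?_)
  simp only [Pi.add_apply, hP, hQ, mulCoord_apply, SchwartzMap.pderivCLM_apply, map_mul,
    Complex.conj_ofReal]
  ring

private lemma cross_complex (φ : SchwartzMap (EuclideanSpace ℝ (Fin n)) ℂ) :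
    ∫ x, (φ x * (starRingEnd ℂ) (xGrad n (⇑φ) x)
        + (starRingEnd ℂ) (φ x) * xGrad n (⇑φ) x)
      = -(n : ℂ) * ∫ x, φ x * (starRingEnd ℂ) (φ x) := by
  have hpt : ∀ x, (φ x * (starRingEnd ℂ) (xGrad n (⇑φ) x)
        + (starRingEnd ℂ) (φ x) * xGrad n (⇑φ) x)
      = ∑ j, ((x j : ℝ) : ℂ) *
        (φ x * (starRingEnd ℂ) (fderiv ℝ (⇑φ) x (EuclideanSpace.single j 1))
          + (starRingEnd ℂ) (φ x) * fderiv ℝ (⇑φ) x (EuclideanSpace.single j 1)) := by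
    intro x
    simp only [xGrad, map_sum, map_mul, Complex.conj_ofReal, Finset.mul_sum,
      ← Finset.sum_add_distrib]
    exact Finset.sum_congr rfl fun j _ => by ring
  calc ∫ x, (φ x * (starRingEnd ℂ) (xGrad n (⇑φ) x)
        + (starRingEnd ℂ) (φ x) * xGrad n (⇑φ) x)
      = ∫ x, ∑ j, ((x j : ℝ) : ℂ) *
        (φ x * (starRingEnd ℂ) (fderiv ℝ (⇑φ) x (EuclideanSpace.single j 1))
          + (starRingEnd ℂ) (φ x) * fderiv ℝ (⇑φ) x (EuclideanSpace.single j 1)) := by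
        exact integral_congr_ae (Filter.Eventually.of_forall fun x => hpt x)
    _ = ∑ j, ∫ x, ((x j : ℝ) : ℂ) *
        (φ x * (starRingEnd ℂ) (fderiv ℝ (⇑φ) x (EuclideanSpace.single j 1))
          + (starRingEnd ℂ) (φ x) * fderiv ℝ (⇑φ) x (EuclideanSpace.single j 1)) :=
        integral_finset_sum _ (fun j _ => int_term φ j)
    _ = ∑ _j : Fin n, - ∫ x, φ x * (starRingEnd ℂ) (φ x) :=
        Finset.sum_congr rfl fun j _ => ibp_j φ j
    _ = -(n : ℂ) * ∫ x, φ x * (starRingEnd ℂ) (φ x) := by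
        simp [Finset.sum_const]

private lemma cross_re (φ : SchwartzMap (EuclideanSpace ℝ (Fin n)) ℂ) :
    2 * ∫ x, ((starRingEnd ℂ) (φ x) * xGrad n (⇑φ) x).re
      = -(n : ℝ) * ∫ x, ‖φ x‖ ^ 2 := by
  have hG : xGrad n (⇑φ) = ⇑(xGradS n φ) := funext fun x => (xGradS_apply φ x).symm
  have hint : Integrable (fun x => (starRingEnd ℂ) (φ x) * xGrad n (⇑φ) x) := by
    rw [hG]; exact int_conj_mul φ (xGradS n φ)
  have hint' : Integrable (fun x => φ x * (starRingEnd ℂ) (xGrad n (⇑φ) x)) := by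
    rw [hG]; exact int_mul_conj φ (xGradS n φ)
  have hsplit : ∫ x, (φ x * (starRingEnd ℂ) (xGrad n (⇑φ) x)
        + (starRingEnd ℂ) (φ x) * xGrad n (⇑φ) x)
      = (starRingEnd ℂ) (∫ x, (starRingEnd ℂ) (φ x) * xGrad n (⇑φ) x)
        + ∫ x, (starRingEnd ℂ) (φ x) * xGrad n (⇑φ) x := by
    rw [integral_add hint' hint, ← integral_conj]
    congr 1
    exact integral_congr_ae (Filter.Eventually.of_forall fun x => by simp [map_mul, mul_comm])
  have hnorm : ∫ x, φ x * (starRingEnd ℂ) (φ x) = ((∫ x, ‖φ x‖ ^ 2 : ℝ) : ℂ) := by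
    have h : ∫ x, φ x * (starRingEnd ℂ) (φ x) = ∫ x, ((‖φ x‖ ^ 2 : ℝ) : ℂ) :=
      integral_congr_ae (Filter.Eventually.of_forall fun x => by
        show φ x * (starRingEnd ℂ) (φ x) = ((‖φ x‖ ^ 2 : ℝ) : ℂ)
        rw [Complex.mul_conj]
        norm_cast
        rw [Complex.normSq_eq_norm_sq])
    rw [h]
    exact integral_ofReal
  have key := cross_complex φ
  rw [hsplit, hnorm] at key
  have := congrArg Complex.re key
  simp only [Complex.add_re, Complex.conj_re] at this
  have h2' : ∫ x, ((starRingEnd ℂ) (φ x) * xGrad n (⇑φ) x).re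
      = (∫ x, (starRingEnd ℂ) (φ x) * xGrad n (⇑φ) x).re := by
    simpa using integral_re hint
  rw [h2', two_mul, this]
  simp
end cross

section part1
variable {n : ℕ}

private lemma pt_expand (z w : ℂ) (c : ℝ) :
    ‖z + (c : ℂ) * w‖ ^ 2
      = ‖z‖ ^ 2 + 2 * c * ((starRingEnd ℂ) w * z).re + c ^ 2 * ‖w‖ ^ 2 := by
  have h : ∀ u : ℂ, ‖u‖ ^ 2 = Complex.normSq u := fun u => by
    rw [Complex.sq_norm]
  rw [h, h, h, Complex.normSq_add, Complex.normSq_mul, Complex.normSq_ofReal]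
  have : (z * (starRingEnd ℂ) ((c : ℂ) * w)).re = c * ((starRingEnd ℂ) w * z).re := by
    rw [map_mul, Complex.conj_ofReal, show z * ((c:ℂ) * (starRingEnd ℂ) w)
      = (c : ℂ) * ((starRingEnd ℂ) w * z) by ring, Complex.re_ofReal_mul]
  rw [this]
  ring

private lemma int_re_cross (φ : SchwartzMap (EuclideanSpace ℝ (Fin n)) ℂ) :
    Integrable (fun x => ((starRingEnd ℂ) (φ x) * xGrad n (⇑φ) x).re) := by
  have hG : xGrad n (⇑φ) = ⇑(xGradS n φ) := funext fun x => (xGradS_apply φ x).symm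
  have hint : Integrable (fun x => (starRingEnd ℂ) (φ x) * xGrad n (⇑φ) x) := by
    rw [hG]; exact int_conj_mul φ (xGradS n φ)
  simpa using hint.re

private lemma int_normSq_xGrad (φ : SchwartzMap (EuclideanSpace ℝ (Fin n)) ℂ) :
    Integrable (fun x => ‖xGrad n (⇑φ) x‖ ^ 2) := by
  have hG : xGrad n (⇑φ) = ⇑(xGradS n φ) := funext fun x => (xGradS_apply φ x).symm
  rw [hG]; exact int_normSq (xGradS n φ)

private lemma part1_eq (φ : SchwartzMap (EuclideanSpace ℝ (Fin n)) ℂ) :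
    ∫ x, ‖xGrad n (⇑φ) x + (((n : ℝ) / 2 : ℝ) : ℂ) * φ x‖ ^ 2
      = (∫ x, ‖xGrad n (⇑φ) x‖ ^ 2) - ((n : ℝ) / 2) ^ 2 * ∫ x, ‖φ x‖ ^ 2 := by
  set c : ℝ := (n : ℝ) / 2 with hc
  have hsplit : ∫ x, ‖xGrad n (⇑φ) x + (c : ℂ) * φ x‖ ^ 2
      = (∫ x, ‖xGrad n (⇑φ) x‖ ^ 2)
        + ((2 * c) * (∫ x, ((starRingEnd ℂ) (φ x) * xGrad n (⇑φ) x).re)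
          + c ^ 2 * ∫ x, ‖φ x‖ ^ 2) := by
    calc ∫ x, ‖xGrad n (⇑φ) x + (c : ℂ) * φ x‖ ^ 2
        = ∫ x, (‖xGrad n (⇑φ) x‖ ^ 2
            + ((2 * c) * ((starRingEnd ℂ) (φ x) * xGrad n (⇑φ) x).re
              + c ^ 2 * ‖φ x‖ ^ 2)) := by
          refine integral_congr_ae (Filter.Eventually.of_forall fun x => ?_)
          show ‖xGrad n (⇑φ) x + (c : ℂ) * φ x‖ ^ 2 = _
          rw [pt_expand (xGrad n (⇑φ) x) (φ x) c]; ring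
      _ = (∫ x, ‖xGrad n (⇑φ) x‖ ^ 2)
            + ∫ x, ((2 * c) * ((starRingEnd ℂ) (φ x) * xGrad n (⇑φ) x).re
              + c ^ 2 * ‖φ x‖ ^ 2) :=
          integral_add (int_normSq_xGrad φ) (((int_re_cross φ).const_mul _).add
            ((int_normSq φ).const_mul _))
      _ = (∫ x, ‖xGrad n (⇑φ) x‖ ^ 2)
            + ((∫ x, (2 * c) * ((starRingEnd ℂ) (φ x) * xGrad n (⇑φ) x).re)
              + ∫ x, c ^ 2 * ‖φ x‖ ^ 2) := by
          rw [integral_add ((int_re_cross φ).const_mul _) ((int_normSq φ).const_mul _)]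
      _ = _ := by rw [integral_const_mul, integral_const_mul]
  have hcross := cross_re φ
  have h2R : (2 * c) * (∫ x, ((starRingEnd ℂ) (φ x) * xGrad n (⇑φ) x).re)
      = -(2 * c ^ 2) * ∫ x, ‖φ x‖ ^ 2 := by
    have e : (2 * c) * (∫ x, ((starRingEnd ℂ) (φ x) * xGrad n (⇑φ) x).re)
        = c * (2 * ∫ x, ((starRingEnd ℂ) (φ x) * xGrad n (⇑φ) x).re) := by ring
    rw [e, hcross, hc]; ring
  rw [hsplit, h2R]; ring

end part1

section part2
variable {n : ℕ}

private lemma euler_formula (φ : SchwartzMap (EuclideanSpace ℝ (Fin n)) ℂ)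
    (y : EuclideanSpace ℝ (Fin n)) :
    fderiv ℝ (⇑φ) y y = xGrad n (⇑φ) y := by
  have hy : (∑ j, (y j) • EuclideanSpace.single j (1:ℝ)) = y := by
    have := (EuclideanSpace.basisFun (Fin n) ℝ).sum_repr y
    simpa [EuclideanSpace.basisFun_apply, EuclideanSpace.basisFun_repr] using this
  have key : (fderiv ℝ (⇑φ) y) (∑ j, (y j) • EuclideanSpace.single j (1:ℝ))
      = xGrad n (⇑φ) y := by
    rw [map_sum, xGrad]
    refine Finset.sum_congr rfl fun j _ => ?_
    rw [(fderiv ℝ (⇑φ) y).map_smul, Complex.real_smul]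
  rw [hy] at key
  exact key

private lemma euler_rigid (hn : 1 ≤ n) (φ : SchwartzMap (EuclideanSpace ℝ (Fin n)) ℂ)
    (hpt : ∀ y, xGrad n (⇑φ) y = -((((n : ℝ) / 2 : ℝ)) : ℂ) * φ y) : φ = 0 := by
  set c : ℝ := (n : ℝ) / 2 with hc
  have hcpos : 0 < c := by
    have : (1 : ℝ) ≤ (n : ℝ) := by exact_mod_cast hn
    rw [hc]; linarith
  have hE : ∀ y, fderiv ℝ (⇑φ) y y = -(c : ℂ) * φ y := fun y => by
    rw [euler_formula φ y, hpt y]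
  -- pointwise vanishing
  have hzero : ∀ x, φ x = 0 := by
    intro x
    set h : ℝ → ℂ := fun t => ((t ^ c : ℝ) : ℂ) * φ (t • x) with hh
    have hder : ∀ t, t ∈ Set.Ioi (0:ℝ) → HasDerivAt h 0 t := by
      intro t ht
      have ht' : (0:ℝ) < t := ht
      have h1 : HasDerivAt (fun s : ℝ => ((s ^ c : ℝ) : ℂ)) ((c * t ^ (c - 1) : ℝ) : ℂ) t :=
        (Real.hasDerivAt_rpow_const (Or.inl ht'.ne')).ofReal_comp
      have hline : HasDerivAt (fun s : ℝ => s • x) x t := by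
        simpa using (hasDerivAt_id t).smul_const x
      have h2 : HasDerivAt (fun s : ℝ => φ (s • x)) (fderiv ℝ (⇑φ) (t • x) x) t :=
        ((φ.differentiable (t • x)).hasFDerivAt).comp_hasDerivAt t hline
      have hfx : fderiv ℝ (⇑φ) (t • x) x = (t⁻¹ : ℝ) • (-(c : ℂ) * φ (t • x)) := by
        have h3 := hE (t • x)
        rw [show fderiv ℝ (⇑φ) (t • x) (t • x) = t • fderiv ℝ (⇑φ) (t • x) x from
          (fderiv ℝ (⇑φ) (t • x)).map_smul t x] at h3
        rw [← h3, smul_smul, inv_mul_cancel₀ ht'.ne', one_smul]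
      have hmul := h1.mul h2
      rw [hfx] at hmul
      have hD : ((c * t ^ (c - 1) : ℝ) : ℂ) * φ (t • x)
          + ((t ^ c : ℝ) : ℂ) * ((t⁻¹ : ℝ) • (-(c : ℂ) * φ (t • x))) = 0 := by
        rw [Complex.real_smul, Real.rpow_sub_one ht'.ne' c]
        push_cast
        have htC : (t : ℂ) ≠ 0 := by exact_mod_cast ht'.ne'
        field_simp
        ring
      rwa [hD] at hmul
    have hconst : ∀ t, t ∈ Set.Ioc (0:ℝ) 1 → φ x = h t := by
      intro t ht
      have hcont : ContinuousOn h (Set.Icc t 1) := by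
        refine ContinuousOn.mul ?_ (Continuous.continuousOn ?_)
        · refine fun s hs => ((Complex.continuous_ofReal.continuousAt).comp ?_).continuousWithinAt
          exact Real.continuousAt_rpow_const s c (Or.inl (lt_of_lt_of_le ht.1 hs.1).ne')
        · exact φ.continuous.comp (continuous_id.smul continuous_const)
      have h1eq := constant_of_has_deriv_right_zero hcont (fun s hs =>
        (hder s (lt_of_lt_of_le ht.1 hs.1)).hasDerivWithinAt) 1 ⟨ht.2, le_refl 1⟩
      rw [← h1eq, hh]
      simp [Real.one_rpow]
    obtain ⟨M, hM⟩ : ∃ M, ∀ y, ‖φ y‖ ≤ M := ⟨_, fun y => SchwartzMap.norm_le_seminorm ℝ φ y⟩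
    have hbound : ∀ᶠ t in nhdsWithin (0:ℝ) (Set.Ioi 0), ‖φ x‖ ≤ t ^ c * M := by
      filter_upwards [Ioc_mem_nhdsGT_of_mem (Set.mem_Ico.mpr ⟨le_refl (0:ℝ), zero_lt_one⟩)]
        with t ht
      rw [hconst t ht, hh]
      calc ‖((t ^ c : ℝ) : ℂ) * φ (t • x)‖ = (t ^ c) * ‖φ (t • x)‖ := by
            rw [norm_mul, Complex.norm_real, Real.norm_eq_abs,
              _root_.abs_of_nonneg (Real.rpow_nonneg ht.1.le c)]
        _ ≤ t ^ c * M := by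
            exact mul_le_mul_of_nonneg_left (hM _) (Real.rpow_nonneg ht.1.le c)
    have htend : Filter.Tendsto (fun t : ℝ => t ^ c * M) (nhdsWithin (0:ℝ) (Set.Ioi 0))
        (nhds 0) := by
      have h0 : Filter.Tendsto (fun t : ℝ => t ^ c) (nhds (0:ℝ)) (nhds 0) := by
        have := Real.continuousAt_rpow_const 0 c (Or.inr hcpos.le)
        simpa [Real.zero_rpow hcpos.ne'] using this.tendsto
      simpa using (h0.mono_left nhdsWithin_le_nhds).mul_const M
    have : ‖φ x‖ ≤ 0 := ge_of_tendsto htend hbound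
    exact norm_le_zero_iff.mp this
  exact DFunLike.ext _ _ fun x => hzero x

end part2

/-- (1) The equality `‖x·∇φ‖² = ‖x·∇φ + (n/2)φ‖² + (n/2)²‖φ‖²` holds for every
Schwartz function `φ`; (2) there is no nonzero Schwartz `φ` with
`‖x·∇φ‖² = (n/2)²‖φ‖²`; in particular `(n/2)‖φ‖ ≤ ‖x·∇φ‖` for every Schwartz `φ`,
with equality only for `φ = 0`. -/
theorem stmt_16 (n : ℕ) (hn : 1 ≤ n) :
    (∀ φ : SchwartzMap (EuclideanSpace ℝ (Fin n)) ℂ,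
      ∫ x, ‖xGrad n (⇑φ) x‖ ^ 2
        = (∫ x, ‖xGrad n (⇑φ) x + (((n : ℝ) / 2 : ℝ) : ℂ) * φ x‖ ^ 2) +
          ((n : ℝ) / 2) ^ 2 * ∫ x, ‖φ x‖ ^ 2) ∧
    (¬ ∃ φ : SchwartzMap (EuclideanSpace ℝ (Fin n)) ℂ, φ ≠ 0 ∧
      ∫ x, ‖xGrad n (⇑φ) x‖ ^ 2 = ((n : ℝ) / 2) ^ 2 * ∫ x, ‖φ x‖ ^ 2) ∧
    (∀ φ : SchwartzMap (EuclideanSpace ℝ (Fin n)) ℂ,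
      ((n : ℝ) / 2) * Real.sqrt (∫ x, ‖φ x‖ ^ 2)
          ≤ Real.sqrt (∫ x, ‖xGrad n (⇑φ) x‖ ^ 2) ∧
        (((n : ℝ) / 2) * Real.sqrt (∫ x, ‖φ x‖ ^ 2)
            = Real.sqrt (∫ x, ‖xGrad n (⇑φ) x‖ ^ 2) → φ = 0)) := by
  have hc0 : (0:ℝ) ≤ (n : ℝ) / 2 := by positivity
  -- part (2) as a lemma used twice
  have part2 : ∀ φ : SchwartzMap (EuclideanSpace ℝ (Fin n)) ℂ,
      (∫ x, ‖xGrad n (⇑φ) x‖ ^ 2 = ((n : ℝ) / 2) ^ 2 * ∫ x, ‖φ x‖ ^ 2) → φ = 0 := by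
    intro φ heq
    have hmid : ∫ x, ‖xGrad n (⇑φ) x + (((n : ℝ) / 2 : ℝ) : ℂ) * φ x‖ ^ 2 = 0 := by
      rw [part1_eq φ, heq]; ring
    set χ : SchwartzMap (EuclideanSpace ℝ (Fin n)) ℂ :=
      xGradS n φ + ((((n : ℝ) / 2 : ℝ) : ℂ)) • φ with hχdef
    have hχ : ∀ x, χ x = xGrad n (⇑φ) x + (((n : ℝ) / 2 : ℝ) : ℂ) * φ x := by
      intro x
      rw [hχdef, SchwartzMap.add_apply, SchwartzMap.smul_apply, xGradS_apply, smul_eq_mul]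
    have hint : Integrable (fun x => ‖χ x‖ ^ 2) := int_normSq χ
    have hzero : ∫ x, ‖χ x‖ ^ 2 = 0 := by
      rw [← hmid]
      exact integral_congr_ae (Filter.Eventually.of_forall fun x => by
        show ‖χ x‖ ^ 2 = _
        rw [hχ x])
    have hae : (fun x => ‖χ x‖ ^ 2) =ᵐ[volume] 0 :=
      (integral_eq_zero_iff_of_nonneg (fun x => by positivity) hint).mp hzero
    have hfun : (fun x => ‖χ x‖ ^ 2) = 0 :=
      (Continuous.ae_eq_iff_eq volume ((χ.continuous.norm).pow 2) continuous_const).mp hae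
    have hχ0 : ∀ x, χ x = 0 := fun x => by
      have := congrFun hfun x
      simp only [Pi.zero_apply, pow_eq_zero_iff, norm_eq_zero] at this
      simpa using this
    refine euler_rigid hn φ (fun y => ?_)
    have := hχ0 y
    rw [hχ y] at this
    have := eq_neg_of_add_eq_zero_left this
    rw [this]; ring
  refine ⟨fun φ => by have := part1_eq φ; linarith, ?_, ?_⟩
  · rintro ⟨φ, hφ, heq⟩
    exact hφ (part2 φ heq)
  · intro φ
    have hIφ : (0:ℝ) ≤ ∫ x, ‖φ x‖ ^ 2 := integral_nonneg (fun x => by positivity)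
    have hIG : (0:ℝ) ≤ ∫ x, ‖xGrad n (⇑φ) x‖ ^ 2 := integral_nonneg (fun x => by positivity)
    have hmid : (0:ℝ) ≤ ∫ x, ‖xGrad n (⇑φ) x + (((n : ℝ) / 2 : ℝ) : ℂ) * φ x‖ ^ 2 :=
      integral_nonneg (fun x => by positivity)
    have hge : ((n : ℝ) / 2) ^ 2 * ∫ x, ‖φ x‖ ^ 2 ≤ ∫ x, ‖xGrad n (⇑φ) x‖ ^ 2 := by
      have := part1_eq φ; linarith
    have hsqrt : ((n : ℝ) / 2) * Real.sqrt (∫ x, ‖φ x‖ ^ 2)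
        = Real.sqrt (((n : ℝ) / 2) ^ 2 * ∫ x, ‖φ x‖ ^ 2) := by
      rw [Real.sqrt_mul (by positivity), Real.sqrt_sq hc0]
    constructor
    · rw [hsqrt]
      exact Real.sqrt_le_sqrt hge
    · intro heq
      refine part2 φ ?_
      have h1 : ∫ x, ‖xGrad n (⇑φ) x‖ ^ 2
          = (Real.sqrt (∫ x, ‖xGrad n (⇑φ) x‖ ^ 2)) ^ 2 := (Real.sq_sqrt hIG).symm
      rw [h1, ← heq]
      rw [mul_pow, Real.sq_sqrt hIφ]
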